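/- Let P be a concurrent program and 𝒫 a set of preemption points. P has a sequentially consistent interleaving whose set of preemption positions corresponds exactly to 𝒫 if and only if the block-program P^𝒫 has a sequentially consistent interleaving of its blocks in which no two consecutive blocks come from the same thread. -/

import Mathlib

/-- Memory events: reads and writes of natural-number values to variables of type `V`. -/
inductive Event (V : Type) where
  | read  (x : V) (d : ℕ)
  | write (x : V) (d : ℕ)
deriving DecidableEq

variable {V ι : Type}

/-- A sequence of events is sequentially consistent (SC): every read `r(x,d)` has a
preceding write `w(x,d)` with no write of a different value to `x` in between. -/
def SC (σ : List (Event V)) : Prop :=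
  ∀ p x d, σ[(p : ℕ)]? = some (Event.read x d) →
    ∃ q, q < p ∧ σ[q]? = some (Event.write x d) ∧
      ∀ r, q < r → r < p → ∀ d', d' ≠ d → σ[r]? ≠ some (Event.write x d')

/-- `σ` is an interleaving of the given threads: its restriction to each
thread identifier equals that thread's event sequence. -/
def IsInterleaving [DecidableEq ι] (threads : ι → List (Event V)) (σ : List (ι × Event V)) : Prop :=
  ∀ i, σ.filterMap (fun a => if a.1 = i then some a.2 else none) = threads i

/-- A preemption occurs at position `j`: the events at `j` and `j+1` are from
different threads and the event at `j` is not the last event of its thread. -/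
def PreemptionAt (σ : List (ι × Event V)) (j : ℕ) : Prop :=
  ∃ a b, σ[j]? = some a ∧ σ[j + 1]? = some b ∧ a.1 ≠ b.1 ∧
    ∃ r c, j < r ∧ σ[r]? = some c ∧ c.1 = a.1

open Classical in
/-- The number of preemption positions of `σ`. -/
noncomputable def numPreemptions (σ : List (ι × Event V)) : ℕ :=
  ((Finset.range σ.length).filter fun j => PreemptionAt σ j).card

open Classical in
/-- The number of context switches of `σ` (adjacent events of different threads). -/
noncomputable def numSwitches (σ : List (ι × Event V)) : ℕ :=
  ((Finset.range σ.length).filter fun j =>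
    ∃ a b, σ[j]? = some a ∧ σ[j + 1]? = some b ∧ a.1 ≠ b.1).card

/-- The (increasing) list of positions of `σ` carrying events of thread `i`. -/
def threadPositions [DecidableEq ι] (σ : List (ι × Event V)) (i : ι) : List ℕ :=
  (List.range σ.length).filter fun p => decide ((σ[p]?).map Prod.fst = some i)

/-- The position in `σ` of the `j`-th event of thread `i`. -/
def posOf [DecidableEq ι] (σ : List (ι × Event V)) (i : ι) (j : ℕ) : ℕ :=
  (threadPositions σ i).getD j 0

/-- All events of thread `t` occur before all events of thread `t'` in `σ`. -/
def ThreadBefore [DecidableEq ι] (σ : List (ι × Event V)) (t t' : ι) : Prop :=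
  ∀ p ∈ threadPositions σ t, ∀ q ∈ threadPositions σ t', p < q

/-- The event is a write to variable `x`. -/
def writesTo (x : V) : Event V → Prop
  | Event.write y _ => y = x
  | _ => False

/-- A 1-writer program: for each variable, a single thread performs all writes to it. -/
def OneWriter (threads : ι → List (Event V)) : Prop :=
  ∀ x i i', (∃ e ∈ threads i, writesTo x e) → (∃ e ∈ threads i', writesTo x e) → i = i'

/-- The events of thread `i` from its index `s` onwards appear contiguously in `σ`. -/
def ContiguousFrom [DecidableEq ι] (σ : List (ι × Event V)) (i : ι) (s : ℕ) : Prop :=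
  ∀ j, s ≤ j → j + 1 < (threadPositions σ i).length → posOf σ i (j + 1) = posOf σ i j + 1

/-- Conflict-graph edge `tr → tw` between outer blocks (suffixes of the threads
starting at indices `s tr`, `s tw`): the last write to some variable `x` in the
outer block of `tw` conflicts with a read of `x` in the outer block of `tr`. -/
def ConflictEdge [DecidableEq ι] (threads : ι → List (Event V)) (s : ι → ℕ) (tr tw : ι) : Prop :=
  tr ≠ tw ∧ ∃ x d d' jr jw, d ≠ d' ∧
    s tr ≤ jr ∧ (threads tr)[jr]? = some (Event.read x d) ∧
    s tw ≤ jw ∧ (threads tw)[jw]? = some (Event.write x d') ∧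
    ∀ j d'', jw < j → (threads tw)[j]? ≠ some (Event.write x d'')

/-- Splitting a list into contiguous blocks immediately after each position in `cut`. -/
def splitAtCuts {α : Type} (l : List α) (cut : Finset ℕ) : List (List α) :=
  let cs := cut.sort (· ≤ ·)
  ((0 :: cs.map (· + 1)).zip (cs.map (· + 1) ++ [l.length])).map fun p => (l.take p.2).drop p.1


section AuxStmt6
variable [DecidableEq ι]

lemma mem_threadPositions {σ : List (ι × Event V)} {i : ι} {p : ℕ} :
    p ∈ threadPositions σ i ↔ p < σ.length ∧ (σ[p]?).map Prod.fst = some i := by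
  simp [threadPositions, List.mem_filter, List.mem_range]

lemma sorted_threadPositions (σ : List (ι × Event V)) (i : ι) :
    (threadPositions σ i).Pairwise (· < ·) :=
  List.pairwise_lt_range.filter _

lemma threadPositions_cons (a : ι × Event V) (σ : List (ι × Event V)) (i : ι) :
    threadPositions (a :: σ) i =
      (if a.1 = i then [0] else []) ++ (threadPositions σ i).map (· + 1) := by
  unfold threadPositions
  rw [List.length_cons, List.range_succ_eq_map, List.filter_cons, List.filter_map]
  have : (fun p => decide (((a :: σ)[p]?).map Prod.fst = some i)) ∘ Nat.succ =
      fun p => decide ((σ[p]?).map Prod.fst = some i) := by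
    funext p; simp
  rw [this]
  by_cases h : a.1 = i <;> simp [h, Nat.succ_eq_add_one]

lemma length_threadPositions (σ : List (ι × Event V)) (i : ι) :
    (threadPositions σ i).length =
      (σ.filterMap (fun a => if a.1 = i then some a.2 else none)).length := by
  induction σ with
  | nil => simp [threadPositions]
  | cons a σ ih =>
    rw [threadPositions_cons, List.filterMap_cons]
    by_cases h : a.1 = i <;> simp [h, ih]

lemma posOf_eq_get {σ : List (ι × Event V)} {i : ι} {j : ℕ}
    (hj : j < (threadPositions σ i).length) :
    posOf σ i j = (threadPositions σ i).get ⟨j, hj⟩ := by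
  simp [posOf, List.getD_eq_getElem?_getD, List.getElem?_eq_getElem hj, List.get_eq_getElem]

lemma posOf_mem {σ : List (ι × Event V)} {i : ι} {j : ℕ}
    (hj : j < (threadPositions σ i).length) :
    posOf σ i j ∈ threadPositions σ i := by
  rw [posOf_eq_get hj]; exact List.get_mem _ _

lemma posOf_lt_posOf {σ : List (ι × Event V)} {i : ι} {j j' : ℕ}
    (h : j < j') (hj' : j' < (threadPositions σ i).length) :
    posOf σ i j < posOf σ i j' := by
  have hj : j < (threadPositions σ i).length := h.trans hj'
  rw [posOf_eq_get hj, posOf_eq_get hj']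
  exact (sorted_threadPositions σ i).sortedLT.strictMono_get (by simpa using h)

lemma posOf_le_posOf {σ : List (ι × Event V)} {i : ι} {j j' : ℕ}
    (h : j ≤ j') (hj' : j' < (threadPositions σ i).length) :
    posOf σ i j ≤ posOf σ i j' := by
  rcases lt_or_eq_of_le h with h | h
  · exact (posOf_lt_posOf h hj').le
  · subst h; exact le_rfl

lemma posOf_inj {σ : List (ι × Event V)} {i : ι} {j j' : ℕ}
    (hj : j < (threadPositions σ i).length) (hj' : j' < (threadPositions σ i).length)
    (h : posOf σ i j = posOf σ i j') : j = j' := by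
  rcases lt_trichotomy j j' with h' | h' | h'
  · exact absurd (posOf_lt_posOf h' hj') (by omega)
  · exact h'
  · exact absurd (posOf_lt_posOf h' hj) (by omega)

lemma index_lt_of_mem_gt {σ : List (ι × Event V)} {i : ι} {j : ℕ} {q : ℕ}
    (hj : j < (threadPositions σ i).length) (hq : q ∈ threadPositions σ i)
    (h : posOf σ i j < q) : ∃ m, j < m ∧ m < (threadPositions σ i).length ∧ posOf σ i m = q := by
  obtain ⟨⟨m, hm⟩, rfl⟩ := List.mem_iff_get.1 hq
  refine ⟨m, ?_, hm, posOf_eq_get hm⟩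
  rw [← posOf_eq_get hm] at h
  by_contra hle
  push_neg at hle
  rcases lt_or_eq_of_le hle with h' | h'
  · exact absurd (posOf_lt_posOf h' hj) (by omega)
  · subst h'; exact lt_irrefl _ h

lemma not_mem_between {σ : List (ι × Event V)} {i : ι} {j q : ℕ}
    (hj1 : j + 1 < (threadPositions σ i).length)
    (h1 : posOf σ i j < q) (h2 : q < posOf σ i (j + 1)) : q ∉ threadPositions σ i := by
  intro hq
  obtain ⟨m, hjm, hm, hmeq⟩ := index_lt_of_mem_gt (Nat.lt_of_succ_lt hj1) hq h1
  have := posOf_le_posOf (show j + 1 ≤ m by omega) hm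
  omega

lemma mem_iff_index {σ : List (ι × Event V)} {i : ι} {q : ℕ} (hq : q ∈ threadPositions σ i) :
    ∃ m, m < (threadPositions σ i).length ∧ posOf σ i m = q := by
  obtain ⟨⟨m, hm⟩, rfl⟩ := List.mem_iff_get.1 hq
  exact ⟨m, hm, posOf_eq_get hm⟩

end AuxStmt6

/-- `P` has an SC interleaving whose preemption positions correspond
exactly to the chosen preemption points `cuts` iff the corresponding block-program has
an SC interleaving in which the blocks appear contiguously and no two consecutive
blocks come from the same thread. -/
theorem stmt6 {V : Type} (k : ℕ) (threads : Fin k → List (Event V))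
    (cuts : Fin k → Finset ℕ)
    (hvalid : ∀ i, ∀ c ∈ cuts i, c + 1 < (threads i).length) :
    (∃ σ : List (Fin k × Event V),
        IsInterleaving threads σ ∧ SC (σ.map Prod.snd) ∧
        ∀ j, PreemptionAt σ j ↔ ∃ i, ∃ c ∈ cuts i, posOf σ i c = j) ↔
    (∃ σ : List (Fin k × Event V),
        IsInterleaving threads σ ∧ SC (σ.map Prod.snd) ∧
        (∀ i j, j + 1 < (threads i).length → j ∉ cuts i →
            posOf σ i (j + 1) = posOf σ i j + 1) ∧
        (∀ i, ∀ c ∈ cuts i, (σ[posOf σ i c + 1]?).map Prod.fst ≠ some i)) := by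
  have key : ∀ σ : List (Fin k × Event V), IsInterleaving threads σ →
      ((∀ j, PreemptionAt σ j ↔ ∃ i, ∃ c ∈ cuts i, posOf σ i c = j) ↔
       ((∀ i j, j + 1 < (threads i).length → j ∉ cuts i →
            posOf σ i (j + 1) = posOf σ i j + 1) ∧
        (∀ i, ∀ c ∈ cuts i, (σ[posOf σ i c + 1]?).map Prod.fst ≠ some i))) := by
    intro σ hInt
    have hlen : ∀ i, (threadPositions σ i).length = (threads i).length := by
      intro i; rw [length_threadPositions, hInt i]
    constructor
    · intro hP
      constructor
      · -- contiguity off cut points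
        intro i j hj1 hjc
        have hj1' : j + 1 < (threadPositions σ i).length := by rw [hlen i]; exact hj1
        have hj' : j < (threadPositions σ i).length := Nat.lt_of_succ_lt hj1'
        have hmono := posOf_lt_posOf (show j < j + 1 by omega) hj1'
        by_contra hne
        have hpp : posOf σ i j + 1 < posOf σ i (j + 1) := by omega
        obtain ⟨hjlt, hjfst⟩ := mem_threadPositions.1 (posOf_mem hj')
        obtain ⟨hj1lt, hj1fst⟩ := mem_threadPositions.1 (posOf_mem hj1')
        obtain ⟨a, ha⟩ := Option.map_eq_some_iff.1 hjfst
        obtain ⟨cev, hcev⟩ := Option.map_eq_some_iff.1 hj1fst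
        have hmidlt : posOf σ i j + 1 < σ.length := hpp.trans hj1lt
        obtain ⟨b, hb⟩ : ∃ b, σ[posOf σ i j + 1]? = some b := by
          rw [List.getElem?_eq_getElem hmidlt]; exact ⟨_, rfl⟩
        have hbne : b.1 ≠ i := by
          intro hbi
          exact not_mem_between hj1' (Nat.lt_succ_self _) hpp
            (mem_threadPositions.2 ⟨hmidlt, by rw [hb]; simp [hbi]⟩)
        have hPre : PreemptionAt σ (posOf σ i j) :=
          ⟨a, b, ha.1, hb, by rw [ha.2]; exact fun h => hbne h.symm,
            posOf σ i (j + 1), cev, hmono, hcev.1, by rw [hcev.2, ha.2]⟩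
        obtain ⟨i', c, hcc, hceq⟩ := (hP _).1 hPre
        have hc1 : c + 1 < (threads i').length := hvalid i' c hcc
        have hc' : c < (threadPositions σ i').length := by rw [hlen i']; omega
        obtain ⟨_, hcfst⟩ := mem_threadPositions.1 (posOf_mem hc')
        rw [hceq] at hcfst
        have hii : i' = i := by
          rw [hjfst] at hcfst; exact (Option.some.inj hcfst).symm
        subst hii
        have := posOf_inj hc' hj' hceq
        subst this
        exact hjc hcc
      · -- at cut points, next event is from a different thread
        intro i c hcc
        have hPre : PreemptionAt σ (posOf σ i c) := (hP _).2 ⟨i, c, hcc, rfl⟩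
        obtain ⟨a, b, ha, hb, hab, _⟩ := hPre
        have hc1 : c + 1 < (threads i).length := hvalid i c hcc
        have hc' : c < (threadPositions σ i).length := by rw [hlen i]; omega
        obtain ⟨_, hcfst⟩ := mem_threadPositions.1 (posOf_mem hc')
        rw [ha] at hcfst
        rw [hb]
        intro h
        have ha1 : a.1 = i := by simpa using hcfst
        have hb1 : b.1 = i := by simpa using h
        exact hab (ha1.trans hb1.symm)
    · rintro ⟨hcontig, hcut⟩ j
      constructor
      · rintro ⟨a, b, ha, hb, hab, r, c, hjr, hr, hrc⟩
        have hjlen : j < σ.length := List.getElem?_eq_some_iff.1 ha |>.choose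
        have hjmem : j ∈ threadPositions σ a.1 :=
          mem_threadPositions.2 ⟨hjlen, by rw [ha]; rfl⟩
        obtain ⟨m, hm, hmeq⟩ := mem_iff_index hjmem
        have hrmem : r ∈ threadPositions σ a.1 :=
          mem_threadPositions.2 ⟨List.getElem?_eq_some_iff.1 hr |>.choose, by rw [hr]; simp [hrc]⟩
        obtain ⟨m', hjm', hm', _⟩ := index_lt_of_mem_gt hm hrmem (by omega)
        have hm1 : m + 1 < (threadPositions σ a.1).length := by omega
        have hm1' : m + 1 < (threads a.1).length := by rw [← hlen a.1]; exact hm1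
        refine ⟨a.1, m, ?_, hmeq⟩
        by_contra hmc
        have := hcontig a.1 m hm1' hmc
        rw [hmeq] at this
        obtain ⟨_, hfst⟩ := mem_threadPositions.1 (posOf_mem hm1)
        rw [this, hb] at hfst
        exact hab (Option.some.inj hfst).symm
      · rintro ⟨i, c, hcc, hceq⟩
        have hc1 : c + 1 < (threads i).length := hvalid i c hcc
        have hc1' : c + 1 < (threadPositions σ i).length := by rw [hlen i]; exact hc1
        have hc' : c < (threadPositions σ i).length := Nat.lt_of_succ_lt hc1'
        obtain ⟨hjlt, hjfst⟩ := mem_threadPositions.1 (posOf_mem hc')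
        obtain ⟨hj1lt, hj1fst⟩ := mem_threadPositions.1 (posOf_mem hc1')
        have hmono := posOf_lt_posOf (show c < c + 1 by omega) hc1'
        obtain ⟨a, ha⟩ := Option.map_eq_some_iff.1 hjfst
        obtain ⟨c', hc'ev⟩ := Option.map_eq_some_iff.1 hj1fst
        have hmidlt : posOf σ i c + 1 < σ.length := by omega
        obtain ⟨b, hb⟩ : ∃ b, σ[posOf σ i c + 1]? = some b := by
          rw [List.getElem?_eq_getElem hmidlt]; exact ⟨_, rfl⟩
        have hbne : a.1 ≠ b.1 := by
          intro h
          apply hcut i c hcc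
          rw [hb]; simp [h.symm.trans ha.2]
        subst hceq
        exact ⟨a, b, ha.1, hb, hbne, posOf σ i (c + 1), c', hmono, hc'ev.1,
          by rw [hc'ev.2, ha.2]⟩
  constructor
  · rintro ⟨σ, hInt, hSC, hP⟩
    exact ⟨σ, hInt, hSC, ((key σ hInt).1 hP).1, ((key σ hInt).1 hP).2⟩
  · rintro ⟨σ, hInt, hSC, h1, h2⟩
    exact ⟨σ, hInt, hSC, (key σ hInt).2 ⟨h1, h2⟩⟩
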